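/- Let A be a nonnegative n×n tubal matrix with A ≠ 0. Then the spectral radius ρ(A) (over all t-eigenvalues) is itself a t-eigenvalue of A, and there is a nonnegative nonzero tubal vector X with A * X = ρ(A) X. -/

import Mathlib

open Finset

/-- The t-product (circular convolution) of real tubal scalars of length `p`. -/
def tConv {p : ℕ} (a b : Fin p → ℝ) : Fin p → ℝ :=
  fun i => ∑ j : Fin p, a j * b (i - j)

/-- The t-product (circular convolution) of complex tubal scalars of length `p`. -/
noncomputable def tConvC {p : ℕ} (a b : Fin p → ℂ) : Fin p → ℂ :=
  fun i => ∑ j : Fin p, a j * b (i - j)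

/-- A tubal scalar is nonnegative if every entry is nonnegative. -/
def TNonneg {p : ℕ} (a : Fin p → ℝ) : Prop := ∀ i, 0 ≤ a i

/-- A tubal scalar is positive if it is nonnegative and not identically zero. -/
def TPos {p : ℕ} (a : Fin p → ℝ) : Prop := TNonneg a ∧ a ≠ 0

/-- A tubal scalar is strongly positive if every entry is strictly positive. -/
def TSPos {p : ℕ} (a : Fin p → ℝ) : Prop := ∀ i, 0 < a i

/-- The product of a tubal matrix and a tubal vector: `(A * X)_i = Σ_j a_{ij} * x_j`. -/
def tMatVec {n p : ℕ} (A : Fin n → Fin n → Fin p → ℝ) (X : Fin n → Fin p → ℝ) :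
    Fin n → Fin p → ℝ :=
  fun i => ∑ j : Fin n, tConv (A i j) (X j)

/-- A tubal matrix is reducible if some nonempty proper index set `I` satisfies
`a_{ij} = 0` for all `i ∈ I`, `j ∉ I`. -/
def TReducible {n p : ℕ} (A : Fin n → Fin n → Fin p → ℝ) : Prop :=
  ∃ I : Finset (Fin n), I.Nonempty ∧ I ≠ Finset.univ ∧ ∀ i ∈ I, ∀ j ∉ I, A i j = 0

/-- The t-spectrum of a real tubal matrix: complex `λ` with `A * X = λ X` for some
nonzero complex tubal vector `X`. -/
def tSpec {n p : ℕ} (A : Fin n → Fin n → Fin p → ℝ) : Set ℂ :=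
  {l | ∃ X : Fin n → Fin p → ℂ, X ≠ 0 ∧
    (fun i => ∑ j : Fin n, tConvC (fun k => (A i j k : ℂ)) (X j)) = l • X}

/-- The spectral radius over all t-eigenvalues. -/
noncomputable def tRho {n p : ℕ} (A : Fin n → Fin n → Fin p → ℝ) : ℝ :=
  sSup ((fun z : ℂ => ‖z‖) '' tSpec A)



-- ======================= auxiliary development =======================
open Polynomial Matrix Filter Topology ENNReal

set_option linter.unusedSectionVars false
set_option maxHeartbeats 1000000
set_option synthInstance.maxHeartbeats 1000000

namespace PFAux

lemma neumann {K : Type*} [Field K] {A : Type*} [Ring A] [Algebra K A]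
    (x : A) (t : K) (ht : t ≠ 0) (N : ℕ) :
    (∑ k ∈ Finset.range N, (t ^ (k + 1))⁻¹ • x ^ k) * (t • 1 - x)
      = 1 - (t ^ N)⁻¹ • x ^ N := by
  induction N with
  | zero => simp
  | succ m ih =>
    rw [Finset.sum_range_succ, add_mul, ih]
    have hexp : (t ^ (m + 1))⁻¹ • x ^ m * (t • 1 - x)
        = (t ^ m)⁻¹ • x ^ m - (t ^ (m + 1))⁻¹ • x ^ (m + 1) := by
      have h1 : (t ^ (m + 1))⁻¹ * t = (t ^ m)⁻¹ := by
        rw [pow_succ, mul_inv, inv_mul_cancel_right₀ ht]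
      rw [mul_sub, smul_mul_assoc, smul_mul_assoc, mul_smul_comm, mul_one, smul_smul,
        h1, ← pow_succ]
    rw [hexp]
    abel


variable {ι : Type*} [Fintype ι] [DecidableEq ι]

noncomputable def toC (M : Matrix ι ι ℂ) : (ι → ℂ) →L[ℂ] (ι → ℂ) :=
  LinearMap.toContinuousLinearMap M.mulVecLin

@[simp] lemma toC_apply (M : Matrix ι ι ℂ) (v : ι → ℂ) : toC M v = M.mulVec v := rfl

lemma toC_mul (M N : Matrix ι ι ℂ) : toC (M * N) = toC M * toC N := by
  ext v i; simp [Matrix.mulVec_mulVec]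

lemma toC_one : toC (1 : Matrix ι ι ℂ) = 1 := by ext v i; simp

lemma toC_pow (M : Matrix ι ι ℂ) (N : ℕ) : toC (M ^ N) = (toC M) ^ N := by
  induction N with
  | zero => simpa using toC_one
  | succ k ih => rw [pow_succ, pow_succ, toC_mul, ih]

lemma toC_unit (M : Matrix ι ι ℂ) (h : IsUnit M.det) : IsUnit (toC M) := by
  refine ⟨⟨toC M, toC M⁻¹, ?_, ?_⟩, rfl⟩
  · rw [← toC_mul, Matrix.mul_nonsing_inv M h, toC_one]
  · rw [← toC_mul, Matrix.nonsing_inv_mul M h, toC_one]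

lemma toC_smul_one_sub (M : Matrix ι ι ℂ) (z : ℂ) :
    toC (z • (1 : Matrix ι ι ℂ) - M) = z • 1 - toC M := by
  ext v i
  simp [Matrix.sub_mulVec, Matrix.smul_mulVec, Matrix.one_mulVec]

lemma toC_sub (M N : Matrix ι ι ℂ) : toC (M - N) = toC M - toC N := by
  ext v i; simp [Matrix.sub_mulVec]

lemma toC_smul (c : ℂ) (M : Matrix ι ι ℂ) : toC (c • M) = c • toC M := by
  ext v i; simp [Matrix.smul_mulVec]

lemma charpoly_eval (M : Matrix ι ι ℂ) (z : ℂ) :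
    M.charpoly.eval z = (z • (1 : Matrix ι ι ℂ) - M).det := by
  rw [Matrix.charpoly, ← coe_evalRingHom, RingHom.map_det]
  congr 1
  ext i j
  by_cases h : i = j
  · subst h
    simp [charmatrix_apply_eq, Matrix.one_apply, Matrix.smul_apply]
  · simp [charmatrix_apply_ne _ _ _ h, Matrix.one_apply, h, Matrix.smul_apply]

lemma E_finite (M : Matrix ι ι ℂ) : {z : ℂ | (z • (1 : Matrix ι ι ℂ) - M).det = 0}.Finite := by
  have h : {z : ℂ | (z • (1 : Matrix ι ι ℂ) - M).det = 0} = {z | M.charpoly.IsRoot z} := by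
    ext z; simp [IsRoot, charpoly_eval]
  rw [h]
  exact Polynomial.finite_setOf_isRoot M.charpoly_monic.ne_zero

lemma E_nonempty [Nonempty ι] (M : Matrix ι ι ℂ) :
    ∃ z : ℂ, (z • (1 : Matrix ι ι ℂ) - M).det = 0 := by
  obtain ⟨z, hz⟩ := Complex.exists_root (f := M.charpoly) (by
    rw [Matrix.charpoly_degree_eq_dim]
    exact_mod_cast Fintype.card_pos)
  exact ⟨z, by rw [← charpoly_eval]; exact hz⟩

lemma mem_E_iff (M : Matrix ι ι ℂ) (z : ℂ) :
    (z • (1 : Matrix ι ι ℂ) - M).det = 0 ↔ ∃ v : ι → ℂ, v ≠ 0 ∧ M.mulVec v = z • v := by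
  rw [← Matrix.exists_mulVec_eq_zero_iff]
  constructor
  · rintro ⟨v, hv, h⟩
    refine ⟨v, hv, ?_⟩
    rw [Matrix.sub_mulVec, Matrix.smul_mulVec, Matrix.one_mulVec, sub_eq_zero] at h
    exact h.symm
  · rintro ⟨v, hv, h⟩
    refine ⟨v, hv, ?_⟩
    rw [Matrix.sub_mulVec, Matrix.smul_mulVec, Matrix.one_mulVec, sub_eq_zero, h]

lemma spectrum_subset_E (M : Matrix ι ι ℂ) :
    spectrum ℂ (toC M) ⊆ {z : ℂ | (z • (1 : Matrix ι ι ℂ) - M).det = 0} := by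
  intro z hz
  by_contra h
  apply hz
  rw [spectrum.mem_iff] at hz
  exact absurd (by
    rw [Algebra.algebraMap_eq_smul_one, ← toC_smul_one_sub]
    exact toC_unit _ (isUnit_iff_ne_zero.mpr h)) hz

lemma spectralRadius_le_of_E {M : Matrix ι ι ℂ} {ρ : ℝ}
    (hub : ∀ z : ℂ, (z • (1 : Matrix ι ι ℂ) - M).det = 0 → ‖z‖ ≤ ρ) :
    spectralRadius ℂ (toC M) ≤ ENNReal.ofReal ρ := by
  rw [spectralRadius]
  refine iSup₂_le fun z hz => ?_
  rw [← enorm_eq_nnnorm, ← ofReal_norm]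
  exact ENNReal.ofReal_le_ofReal (hub z (spectrum_subset_E M hz))

lemma decay [Nonempty ι] (M : Matrix ι ι ℂ) {ρ t : ℝ} (hρ : 0 ≤ ρ)
    (hub : ∀ z : ℂ, (z • (1 : Matrix ι ι ℂ) - M).det = 0 → ‖z‖ ≤ ρ)
    (ht : ρ < t) :
    Tendsto (fun N : ℕ => ‖(toC M) ^ N‖ / t ^ N) atTop (𝓝 0) := by
  set a := toC M
  set t' := (ρ + t) / 2 with ht'
  have h0t' : 0 < t' := by rw [ht']; linarith
  have hρt' : ρ < t' := by rw [ht']; linarith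
  have ht't : t' < t := by rw [ht']; linarith
  have hsr : spectralRadius ℂ a < ENNReal.ofReal t' :=
    lt_of_le_of_lt (spectralRadius_le_of_E hub)
      ((ENNReal.ofReal_lt_ofReal_iff h0t').mpr hρt')
  have hev : ∀ᶠ N : ℕ in atTop, (‖a ^ N‖₊ : ℝ≥0∞) ^ (1 / (N : ℝ)) < ENNReal.ofReal t' :=
    (spectrum.pow_nnnorm_pow_one_div_tendsto_nhds_spectralRadius a).eventually_lt_const hsr
  have hev2 : ∀ᶠ N : ℕ in atTop, ‖a ^ N‖ ≤ t' ^ N := by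
    filter_upwards [hev, eventually_ge_atTop 1] with N h hN
    have hNne : (N : ℝ) ≠ 0 := Nat.cast_ne_zero.mpr (by omega)
    have h2 : ((‖a ^ N‖₊ : ℝ≥0∞) ^ (1 / (N : ℝ))) ^ (N : ℝ) ≤
        (ENNReal.ofReal t') ^ (N : ℝ) := ENNReal.rpow_le_rpow h.le (Nat.cast_nonneg N)
    rw [← ENNReal.rpow_mul, one_div, inv_mul_cancel₀ hNne, ENNReal.rpow_one] at h2
    rw [ENNReal.rpow_natCast, ← ENNReal.ofReal_pow h0t'.le,
      ← enorm_eq_nnnorm, ← ofReal_norm] at h2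
    exact (ENNReal.ofReal_le_ofReal_iff (by positivity)).mp h2
  have h0t : (0 : ℝ) < t := lt_of_le_of_lt hρ ht
  refine squeeze_zero' (Eventually.of_forall fun N => by positivity) ?_
    (tendsto_pow_atTop_nhds_zero_of_lt_one (by positivity) (by
      rw [div_lt_one h0t]; exact ht't) : Tendsto (fun N : ℕ => (t' / t) ^ N) atTop (𝓝 0))
  filter_upwards [hev2] with N h
  rw [div_pow]
  gcongr

section RealM

variable (M : Matrix ι ι ℝ)

lemma pow_entry_nonneg (hM : ∀ i j, 0 ≤ M i j) (N : ℕ) (i j : ι) : 0 ≤ (M ^ N) i j := by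
  induction N generalizing i j with
  | zero => by_cases h : i = j <;> simp [Matrix.one_apply, h]
  | succ m ih =>
    rw [pow_succ, Matrix.mul_apply]
    exact Finset.sum_nonneg fun k _ => mul_nonneg (ih _ _) (hM _ _)

lemma map_pow_c (N : ℕ) : (M ^ N).map Complex.ofReal = (M.map Complex.ofReal) ^ N := by
  have : ∀ B : Matrix ι ι ℝ, B.map Complex.ofReal = Complex.ofRealHom.mapMatrix B := fun B => rfl
  rw [this, this, map_pow]

lemma map_smul_one_sub (t : ℝ) :
    ((t • (1 : Matrix ι ι ℝ) - M).map Complex.ofReal)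
      = (t : ℂ) • (1 : Matrix ι ι ℂ) - M.map Complex.ofReal := by
  ext i j
  by_cases h : i = j <;>
    simp [Matrix.map_apply, Matrix.one_apply, h]

lemma det_c_ne (t : ℝ)
    (h : ((t : ℂ) • (1 : Matrix ι ι ℂ) - M.map Complex.ofReal).det ≠ 0) :
    IsUnit (t • (1 : Matrix ι ι ℝ) - M).det := by
  rw [isUnit_iff_ne_zero]
  intro h0
  apply h
  rw [← map_smul_one_sub]
  have : ∀ B : Matrix ι ι ℝ, (B.map Complex.ofReal).det = (B.det : ℂ) := by
    intro B
    rw [show B.map Complex.ofReal = Complex.ofRealHom.mapMatrix B from rfl,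
      ← RingHom.map_det]
    rfl
  rw [this, h0, Complex.ofReal_zero]

end RealM

lemma entry_eq (M : Matrix ι ι ℝ) (N : ℕ) (i j : ι) :
    ((M.map Complex.ofReal) ^ N) i j = ((M ^ N) i j : ℂ) := by
  rw [← map_pow_c]; rfl

lemma entry_le_opNorm (B : Matrix ι ι ℂ) (i j : ι) : ‖B i j‖ ≤ ‖toC B‖ := by
  have h1 : B i j = toC B (Pi.single j 1) i := by
    rw [toC_apply, Matrix.mulVec_single]; simp
  rw [h1]
  refine le_trans (norm_le_pi_norm _ i) (le_trans ((toC B).le_opNorm _) ?_)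
  rw [Pi.norm_single, norm_one, mul_one]

lemma entry_decay [Nonempty ι] (M : Matrix ι ι ℝ) (hM : ∀ i j, 0 ≤ M i j) {ρ t : ℝ}
    (hρ : 0 ≤ ρ)
    (hub : ∀ z : ℂ, (z • (1 : Matrix ι ι ℂ) - M.map Complex.ofReal).det = 0 → ‖z‖ ≤ ρ)
    (ht : ρ < t) (i j : ι) :
    Tendsto (fun N : ℕ => (M ^ N) i j / t ^ N) atTop (𝓝 0) := by
  have ht0 : 0 < t := lt_of_le_of_lt hρ ht
  have hpn : ∀ N i j, 0 ≤ (M ^ N) i j := by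
    intro N
    induction N with
    | zero => intro i j; by_cases h : i = j <;> simp [Matrix.one_apply, h]
    | succ m ih =>
      intro i j
      rw [pow_succ, Matrix.mul_apply]
      exact Finset.sum_nonneg fun k _ => mul_nonneg (ih _ _) (hM _ _)
  refine squeeze_zero (fun N => div_nonneg (hpn N i j) (by positivity)) (fun N => ?_)
    (decay _ hρ hub ht)
  have h2 : (M ^ N) i j ≤ ‖(toC (M.map Complex.ofReal)) ^ N‖ := by
    rw [← toC_pow]
    refine le_trans ?_ (entry_le_opNorm _ i j)
    rw [entry_eq, Complex.norm_real, Real.norm_of_nonneg (hpn N i j)]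
  exact by gcongr
lemma entry_formula {K : Type*} [Field K] (B R : Matrix ι ι K) (c : K) (i j : ι) :
    ((1 - c • B) * R) i j = R i j - c * ∑ k, B i k * R k j := by
  rw [Matrix.sub_mul, Matrix.one_mul, Matrix.smul_mul, Matrix.sub_apply,
    Matrix.smul_apply, smul_eq_mul, Matrix.mul_apply]

lemma pow_entry_nonnegX (M : Matrix ι ι ℝ) (hM : ∀ i j, 0 ≤ M i j) (N : ℕ) (i j : ι) :
    0 ≤ (M ^ N) i j := by
  induction N generalizing i j with
  | zero => by_cases h : i = j <;> simp [Matrix.one_apply, h]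
  | succ m ih =>
    rw [pow_succ, Matrix.mul_apply]
    exact Finset.sum_nonneg fun k _ => mul_nonneg (ih _ _) (hM _ _)

section Res

variable [Nonempty ι] (M : Matrix ι ι ℝ) {ρ : ℝ}
  (hM : ∀ i j, 0 ≤ M i j)
  (hub : ∀ z : ℂ, (z • (1 : Matrix ι ι ℂ) - M.map Complex.ofReal).det = 0 → ‖z‖ ≤ ρ)
  (hρ0 : 0 ≤ ρ) {t : ℝ} (ht : ρ < t)

include hub hρ0 ht

lemma det_unit_real : IsUnit (t • (1 : Matrix ι ι ℝ) - M).det := by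
  refine det_c_ne M t fun h => ?_
  have := hub t h
  rw [Complex.norm_real, Real.norm_of_nonneg (le_of_lt (lt_of_le_of_lt hρ0 ht))] at this
  linarith

lemma det_unit_c {z : ℂ} (hz : ‖z‖ = t) :
    IsUnit (z • (1 : Matrix ι ι ℂ) - M.map Complex.ofReal).det := by
  rw [isUnit_iff_ne_zero]
  intro h
  have := hub z h
  rw [hz] at this
  linarith

lemma SN_eq (N : ℕ) :
    (∑ k ∈ Finset.range N, ((t : ℝ) ^ (k + 1))⁻¹ • M ^ k)
      = (1 - (t ^ N)⁻¹ • M ^ N) * (t • (1 : Matrix ι ι ℝ) - M)⁻¹ := by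
  have ht0 : t ≠ 0 := ne_of_gt (lt_of_le_of_lt hρ0 ht)
  have hd := det_unit_real M hub hρ0 ht
  have h := neumann M t ht0 N
  calc (∑ k ∈ Finset.range N, ((t : ℝ) ^ (k + 1))⁻¹ • M ^ k)
      = (∑ k ∈ Finset.range N, ((t : ℝ) ^ (k + 1))⁻¹ • M ^ k) *
        ((t • (1 : Matrix ι ι ℝ) - M) * (t • (1 : Matrix ι ι ℝ) - M)⁻¹) := by
        rw [Matrix.mul_nonsing_inv _ hd, mul_one]
    _ = _ := by rw [← mul_assoc, h]

lemma ScN_eq {z : ℂ} (hz : ‖z‖ = t) (N : ℕ) :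
    (∑ k ∈ Finset.range N, (z ^ (k + 1))⁻¹ • (M.map Complex.ofReal) ^ k)
      = (1 - (z ^ N)⁻¹ • (M.map Complex.ofReal) ^ N) *
        (z • (1 : Matrix ι ι ℂ) - M.map Complex.ofReal)⁻¹ := by
  have hz0 : z ≠ 0 := by
    intro h; rw [h, norm_zero] at hz; subst hz; exact absurd ht (not_lt.mpr hρ0)
  have hd := det_unit_c M hub hρ0 ht hz
  have h := neumann (M.map Complex.ofReal) z hz0 N
  calc _ = (∑ k ∈ Finset.range N, (z ^ (k + 1))⁻¹ • (M.map Complex.ofReal) ^ k) *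
        ((z • (1 : Matrix ι ι ℂ) - M.map Complex.ofReal) *
          (z • (1 : Matrix ι ι ℂ) - M.map Complex.ofReal)⁻¹) := by
        rw [Matrix.mul_nonsing_inv _ hd, mul_one]
    _ = _ := by rw [← mul_assoc, h]

include hM

lemma SN_tendsto (i j : ι) :
    Tendsto (fun N => (∑ k ∈ Finset.range N, ((t : ℝ) ^ (k + 1))⁻¹ • M ^ k) i j)
      atTop (𝓝 ((t • (1 : Matrix ι ι ℝ) - M)⁻¹ i j)) := by
  have ht0 : (0:ℝ) < t := lt_of_le_of_lt hρ0 ht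
  set R := (t • (1 : Matrix ι ι ℝ) - M)⁻¹
  have key : ∀ N, (∑ k ∈ Finset.range N, ((t : ℝ) ^ (k + 1))⁻¹ • M ^ k) i j
      = R i j - ∑ k, ((M ^ N) i k / t ^ N) * R k j := by
    intro N
    rw [SN_eq M hub hρ0 ht N, entry_formula]
    congr 1
    rw [Finset.mul_sum]
    refine Finset.sum_congr rfl fun k _ => ?_
    rw [div_eq_mul_inv]
    ring
  simp_rw [key]
  have hsum : Tendsto (fun N => ∑ k, ((M ^ N) i k / t ^ N) * R k j) atTop (𝓝 0) := by
    have : Tendsto (fun N => ∑ k, ((M ^ N) i k / t ^ N) * R k j) atTop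
        (𝓝 (∑ k : ι, 0 * R k j)) :=
      tendsto_finset_sum _ fun k _ => by
        simpa using (entry_decay M hM hρ0 hub ht i k).mul_const (R k j)
    simpa using this
  simpa using tendsto_const_nhds.sub hsum

lemma Rt_nonneg (i j : ι) : 0 ≤ (t • (1 : Matrix ι ι ℝ) - M)⁻¹ i j := by
  have ht0 : (0:ℝ) < t := lt_of_le_of_lt hρ0 ht
  have hpn : ∀ N i j, 0 ≤ (M ^ N) i j := by
    intro N
    induction N with
    | zero => intro i j; by_cases h : i = j <;> simp [Matrix.one_apply, h]
    | succ m ih =>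
      intro i j
      rw [pow_succ, Matrix.mul_apply]
      exact Finset.sum_nonneg fun k _ => mul_nonneg (ih _ _) (hM _ _)
  refine ge_of_tendsto' (SN_tendsto M hM hub hρ0 ht i j) fun N => ?_
  rw [Matrix.sum_apply]
  refine Finset.sum_nonneg fun k _ => ?_
  rw [Matrix.smul_apply, smul_eq_mul]
  exact mul_nonneg (by positivity) (hpn _ _ _)

lemma ScN_tendsto {z : ℂ} (hz : ‖z‖ = t) (i j : ι) :
    Tendsto (fun N => (∑ k ∈ Finset.range N, (z ^ (k + 1))⁻¹ • (M.map Complex.ofReal) ^ k) i j)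
      atTop (𝓝 ((z • (1 : Matrix ι ι ℂ) - M.map Complex.ofReal)⁻¹ i j)) := by
  have ht0 : (0:ℝ) < t := lt_of_le_of_lt hρ0 ht
  have hz0 : z ≠ 0 := by intro h; rw [h, norm_zero] at hz; exact ht0.ne hz
  set Rc := (z • (1 : Matrix ι ι ℂ) - M.map Complex.ofReal)⁻¹
  have key : ∀ N, (∑ k ∈ Finset.range N, (z ^ (k + 1))⁻¹ • (M.map Complex.ofReal) ^ k) i j
      = Rc i j - ∑ k, ((z ^ N)⁻¹ * ((M.map Complex.ofReal) ^ N) i k) * Rc k j := by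
    intro N
    rw [ScN_eq M hub hρ0 ht hz N, entry_formula]
    congr 1
    rw [Finset.mul_sum]
    refine Finset.sum_congr rfl fun k _ => ?_
    ring
  simp_rw [key]
  have hsum : Tendsto (fun N => ∑ k, ((z ^ N)⁻¹ * ((M.map Complex.ofReal) ^ N) i k) * Rc k j)
      atTop (𝓝 0) := by
    have hterm : ∀ k : ι, Tendsto
        (fun N => ((z ^ N)⁻¹ * ((M.map Complex.ofReal) ^ N) i k) * Rc k j) atTop (𝓝 0) := by
      intro k
      rw [tendsto_zero_iff_norm_tendsto_zero]
      refine squeeze_zero (fun N => norm_nonneg _) (fun N => ?_)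
        (by simpa using ((entry_decay M hM hρ0 hub ht i k).mul_const ‖Rc k j‖))
      rw [norm_mul, norm_mul, norm_inv, norm_pow, hz, entry_eq, Complex.norm_real]
      have hpn : 0 ≤ (M ^ N) i k := pow_entry_nonnegX M hM N i k
      rw [Real.norm_of_nonneg hpn]
      exact le_of_eq (by ring)
    have : Tendsto (fun N => ∑ k, ((z ^ N)⁻¹ * ((M.map Complex.ofReal) ^ N) i k) * Rc k j)
        atTop (𝓝 (∑ _k : ι, (0:ℂ))) := tendsto_finset_sum _ fun k _ => hterm k
    simpa using this
  simpa using tendsto_const_nhds.sub hsum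

lemma Rc_entry_le {z : ℂ} (hz : ‖z‖ = t) (i j : ι) :
    ‖(z • (1 : Matrix ι ι ℂ) - M.map Complex.ofReal)⁻¹ i j‖
      ≤ (t • (1 : Matrix ι ι ℝ) - M)⁻¹ i j := by
  have ht0 : (0:ℝ) < t := lt_of_le_of_lt hρ0 ht
  refine le_of_tendsto_of_tendsto' ((ScN_tendsto M hM hub hρ0 ht hz i j).norm)
    (SN_tendsto M hM hub hρ0 ht i j) fun N => ?_
  rw [Matrix.sum_apply, Matrix.sum_apply]
  refine le_trans (norm_sum_le _ _) (Finset.sum_le_sum fun k _ => ?_)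
  rw [Matrix.smul_apply, Matrix.smul_apply, smul_eq_mul, smul_eq_mul, norm_mul,
    norm_inv, norm_pow, hz, entry_eq, Complex.norm_real,
    Real.norm_of_nonneg (pow_entry_nonnegX M hM k i j)]

end Res

lemma opNorm_toC_le (B : Matrix ι ι ℂ) : ‖toC B‖ ≤ ∑ i, ∑ j, ‖B i j‖ := by
  have hK : (0:ℝ) ≤ ∑ i, ∑ j, ‖B i j‖ :=
    Finset.sum_nonneg fun i _ => Finset.sum_nonneg fun j _ => norm_nonneg _
  refine ContinuousLinearMap.opNorm_le_bound _ hK fun v => ?_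
  rw [pi_norm_le_iff_of_nonneg (by positivity)]
  intro i
  rw [toC_apply]
  calc ‖B.mulVec v i‖ = ‖∑ j, B i j * v j‖ := by rw [Matrix.mulVec, dotProduct]
    _ ≤ ∑ j, ‖B i j * v j‖ := norm_sum_le _ _
    _ ≤ ∑ j, ‖B i j‖ * ‖v‖ := Finset.sum_le_sum fun j _ => by
        rw [norm_mul]
        exact mul_le_mul_of_nonneg_left (norm_le_pi_norm v j) (norm_nonneg _)
    _ = (∑ j, ‖B i j‖) * ‖v‖ := by rw [Finset.sum_mul]
    _ ≤ (∑ i', ∑ j, ‖B i' j‖) * ‖v‖ := by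
        refine mul_le_mul_of_nonneg_right ?_ (norm_nonneg v)
        exact Finset.single_le_sum (f := fun i' => ∑ j, ‖B i' j‖)
          (fun i' _ => Finset.sum_nonneg fun j _ => norm_nonneg _) (Finset.mem_univ i)

lemma unit_injective {c : (ι → ℂ) →L[ℂ] (ι → ℂ)} (hc : IsUnit c) {v : ι → ℂ}
    (hv : c v = 0) : v = 0 := by
  obtain ⟨U, hU⟩ := hc
  have := congrArg (fun f : (ι → ℂ) →L[ℂ] (ι → ℂ) => f v) U.inv_mul
  simp only [ContinuousLinearMap.mul_apply, ContinuousLinearMap.one_apply] at this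
  rw [← this, hU, hv, map_zero]

lemma resolvent_lower (Mc : Matrix ι ι ℂ) {z l0 : ℂ}
    (hz : IsUnit (z • (1 : Matrix ι ι ℂ) - Mc).det)
    (hl0 : (l0 • (1 : Matrix ι ι ℂ) - Mc).det = 0) :
    1 ≤ ‖z - l0‖ * ‖toC ((z • (1 : Matrix ι ι ℂ) - Mc)⁻¹)‖ := by
  by_contra hlt
  push_neg at hlt
  set b := toC ((z • (1 : Matrix ι ι ℂ) - Mc)⁻¹) with hb
  set a := toC Mc with ha
  have hmul1 : (z • 1 - a) * b = 1 := by
    rw [ha, hb, ← toC_smul_one_sub, ← toC_mul, Matrix.mul_nonsing_inv _ hz, toC_one]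
  have hmul2 : b * (z • 1 - a) = 1 := by
    rw [ha, hb, ← toC_smul_one_sub, ← toC_mul, Matrix.nonsing_inv_mul _ hz, toC_one]
  have hw : ‖(z - l0) • b‖ < 1 := by
    rw [norm_smul (z - l0) b]; exact hlt
  set u2 : ((ι → ℂ) →L[ℂ] (ι → ℂ))ˣ := Units.oneSub _ hw
  set u1 : ((ι → ℂ) →L[ℂ] (ι → ℂ))ˣ := ⟨z • 1 - a, b, hmul1, hmul2⟩
  have hval : ((u1 * u2 : _ˣ) : (ι → ℂ) →L[ℂ] (ι → ℂ)) = l0 • 1 - a := by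
    show (z • 1 - a) * (1 - (z - l0) • b) = l0 • 1 - a
    have h1 : (1 : (ι → ℂ) →L[ℂ] (ι → ℂ)) - (z - l0) • b
        = toC ((1 : Matrix ι ι ℂ) - (z - l0) • (z • (1 : Matrix ι ι ℂ) - Mc)⁻¹) := by
      rw [toC_sub, toC_smul, toC_one, hb]
    have h2 : z • (1 : (ι → ℂ) →L[ℂ] (ι → ℂ)) - a = toC (z • (1 : Matrix ι ι ℂ) - Mc) := by
      rw [toC_smul_one_sub, ha]
    rw [h1, h2, ← toC_mul]
    have h3 : (z • (1 : Matrix ι ι ℂ) - Mc) *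
        ((1 : Matrix ι ι ℂ) - (z - l0) • (z • (1 : Matrix ι ι ℂ) - Mc)⁻¹)
        = l0 • (1 : Matrix ι ι ℂ) - Mc := by
      rw [mul_sub, mul_one, mul_smul_comm, Matrix.mul_nonsing_inv _ hz, sub_smul]
      module
    rw [h3, toC_smul_one_sub, ha]
  have hunit : IsUnit (l0 • (1:(ι → ℂ) →L[ℂ] (ι → ℂ)) - a) := hval ▸ (u1 * u2).isUnit
  obtain ⟨v, hv0, hv⟩ := (mem_E_iff Mc l0).mp hl0
  apply hv0
  refine unit_injective hunit ?_
  rw [← toC_smul_one_sub]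
  rw [toC_apply, Matrix.sub_mulVec, Matrix.smul_mulVec, Matrix.one_mulVec, hv, sub_self]

theorem pf_matrix [Nonempty ι] (M : Matrix ι ι ℝ) (hM : ∀ i j, 0 ≤ M i j)
    {ρ : ℝ} {l0 : ℂ}
    (hl0 : (l0 • (1 : Matrix ι ι ℂ) - M.map Complex.ofReal).det = 0)
    (hl0ρ : ‖l0‖ = ρ)
    (hub : ∀ z : ℂ, (z • (1 : Matrix ι ι ℂ) - M.map Complex.ofReal).det = 0 → ‖z‖ ≤ ρ) :
    ∃ u : ι → ℝ, (∀ i, 0 ≤ u i) ∧ (∑ i, u i) = 1 ∧ M.mulVec u = ρ • u := by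
  have hρ0 : 0 ≤ ρ := hl0ρ ▸ norm_nonneg _
  -- Step 1: key inequality
  have key : ∀ t : ℝ, ρ < t →
      1 ≤ (t - ρ) * ∑ i, ∑ j, (t • (1 : Matrix ι ι ℝ) - M)⁻¹ i j := by
    intro t ht
    have ht0 : 0 < t := lt_of_le_of_lt hρ0 ht
    obtain ⟨z, hznorm, hzsub⟩ : ∃ z : ℂ, ‖z‖ = t ∧ ‖z - l0‖ = t - ρ := by
      by_cases hρ : ρ = 0
      · have : l0 = 0 := by rwa [hρ, norm_eq_zero] at hl0ρ
        exact ⟨(t : ℂ), by simp [Real.norm_of_nonneg ht0.le], by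
          simp [this, hρ, Real.norm_of_nonneg ht0.le]⟩
      · have hρpos : 0 < ρ := lt_of_le_of_ne hρ0 (Ne.symm hρ)
        refine ⟨((t / ρ : ℝ) : ℂ) * l0, ?_, ?_⟩
        · rw [norm_mul, Complex.norm_real, Real.norm_of_nonneg (by positivity), hl0ρ]
          field_simp
        · have : ((t / ρ : ℝ) : ℂ) * l0 - l0 = ((t / ρ - 1 : ℝ) : ℂ) * l0 := by
            push_cast; ring
          rw [this, norm_mul, Complex.norm_real,
            Real.norm_of_nonneg (by rw [sub_nonneg, le_div_iff₀ hρpos, one_mul]; exact ht.le),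
            hl0ρ]
          field_simp
    have hdetz := det_unit_c M hub hρ0 ht hznorm
    have hlow := resolvent_lower (M.map Complex.ofReal) hdetz hl0
    rw [hzsub] at hlow
    refine le_trans hlow ?_
    refine mul_le_mul_of_nonneg_left ?_ (by linarith)
    refine le_trans (opNorm_toC_le _) ?_
    exact Finset.sum_le_sum fun i _ => Finset.sum_le_sum fun j _ =>
      Rc_entry_le M hM hub hρ0 ht hznorm i j
  -- Step 2: the approximating sequence
  set T : ℕ → ℝ := fun k => ρ + ((k : ℝ) + 1)⁻¹ with hT
  have hTpos : ∀ k, ρ < T k := fun k => by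
    have : (0:ℝ) < ((k:ℝ)+1)⁻¹ := by positivity
    simp only [hT]; linarith
  set Rt : ℕ → Matrix ι ι ℝ := fun k => (T k • (1 : Matrix ι ι ℝ) - M)⁻¹ with hRt
  set q : ℕ → ℝ := fun k => ∑ i, ∑ j, Rt k i j with hq
  have hqk : ∀ k : ℕ, (k : ℝ) + 1 ≤ q k := by
    intro k
    have h1 := key (T k) (hTpos k)
    have h2 : T k - ρ = ((k:ℝ)+1)⁻¹ := by simp [hT]
    rw [h2] at h1
    have hk1 : (0:ℝ) < (k:ℝ)+1 := by positivity
    calc (k:ℝ) + 1 = ((k:ℝ)+1) * 1 := by ring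
      _ ≤ ((k:ℝ)+1) * (((k:ℝ)+1)⁻¹ * q k) := by
          exact mul_le_mul_of_nonneg_left h1 hk1.le
      _ = q k := by field_simp
  have hqpos : ∀ k, 0 < q k := fun k => lt_of_lt_of_le (by positivity) (hqk k)
  have hRtn : ∀ k i j, 0 ≤ Rt k i j := fun k => Rt_nonneg M hM hub hρ0 (hTpos k)
  set y : ℕ → ι → ℝ := fun k => (Rt k).mulVec (fun _ => 1) with hy
  have hy_sum : ∀ k, ∑ i, y k i = q k := by
    intro k
    simp only [hy, hq, Matrix.mulVec, dotProduct, mul_one]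
  have hy_nonneg : ∀ k i, 0 ≤ y k i := fun k i =>
    Finset.sum_nonneg fun j _ => by simpa using mul_nonneg (hRtn k i j) zero_le_one
  set u : ℕ → ι → ℝ := fun k => (q k)⁻¹ • y k with hu
  have hu_nonneg : ∀ k i, 0 ≤ u k i := fun k i =>
    mul_nonneg (inv_nonneg.mpr (hqpos k).le) (hy_nonneg k i)
  have hu_sum : ∀ k, ∑ i, u k i = 1 := by
    intro k
    simp only [hu, Pi.smul_apply, smul_eq_mul, ← Finset.mul_sum, hy_sum]
    field_simp [(hqpos k).ne']
  have hu_le_one : ∀ k i, u k i ≤ 1 := by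
    intro k i
    rw [← hu_sum k]
    exact Finset.single_le_sum (f := fun i => u k i) (fun j _ => hu_nonneg k j)
      (Finset.mem_univ i)
  -- eigen-equation approximation
  have hMy : ∀ k, M.mulVec (y k) = T k • y k - (fun _ => (1:ℝ)) := by
    intro k
    have hdet := det_unit_real M hub hρ0 (hTpos k)
    have h1 : (T k • (1 : Matrix ι ι ℝ) - M).mulVec (y k) = fun _ => (1:ℝ) := by
      rw [hy, Matrix.mulVec_mulVec, Matrix.mul_nonsing_inv _ hdet, Matrix.one_mulVec]
    rw [Matrix.sub_mulVec, Matrix.smul_mulVec, Matrix.one_mulVec] at h1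
    rw [← h1]
    abel
  have hMu : ∀ k, M.mulVec (u k) = T k • u k - (q k)⁻¹ • (fun _ => (1:ℝ)) := by
    intro k
    rw [hu, Matrix.mulVec_smul, hMy k, smul_sub, smul_comm]
  -- residual tends to zero coordinatewise
  have hres : ∀ i, Tendsto (fun k => M.mulVec (u k) i - ρ * u k i) atTop (𝓝 0) := by
    intro i
    have hbound : ∀ k : ℕ, ‖M.mulVec (u k) i - ρ * u k i‖ ≤ 2 * ((k:ℝ)+1)⁻¹ := by
      intro k
      have h1 : M.mulVec (u k) i - ρ * u k i = (T k - ρ) * u k i - (q k)⁻¹ := by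
        rw [hMu k]
        simp only [Pi.sub_apply, Pi.smul_apply, smul_eq_mul]
        ring
      rw [h1, Real.norm_eq_abs]
      have hk1 : (0:ℝ) < (k:ℝ)+1 := by positivity
      have hTρ : T k - ρ = ((k:ℝ)+1)⁻¹ := by simp [hT]
      have hA : 0 ≤ (T k - ρ) * u k i :=
        mul_nonneg (by rw [hTρ]; positivity) (hu_nonneg k i)
      have hA2 : (T k - ρ) * u k i ≤ ((k:ℝ)+1)⁻¹ := by
        rw [hTρ]
        calc ((k:ℝ)+1)⁻¹ * u k i ≤ ((k:ℝ)+1)⁻¹ * 1 :=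
              mul_le_mul_of_nonneg_left (hu_le_one k i) (by positivity)
          _ = ((k:ℝ)+1)⁻¹ := mul_one _
      have hq1 : 0 < (q k)⁻¹ := inv_pos.mpr (hqpos k)
      have hq2 : (q k)⁻¹ ≤ ((k:ℝ)+1)⁻¹ := inv_anti₀ hk1 (hqk k)
      have hc0 : (0:ℝ) < ((k:ℝ)+1)⁻¹ := by positivity
      rw [abs_le]
      constructor
      · rw [hTρ] at hA hA2 ⊢
        linarith
      · rw [hTρ] at hA hA2 ⊢
        linarith
    refine squeeze_zero_norm hbound ?_
    have h2 : Tendsto (fun k : ℕ => ((k:ℝ)+1)⁻¹) atTop (𝓝 0) := by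
      simpa [one_div] using tendsto_one_div_add_atTop_nhds_zero_nat (𝕜 := ℝ)
    simpa using h2.const_mul 2
  set K : Set (ι → ℝ) := {v | (∀ i, 0 ≤ v i) ∧ ∑ i, v i = 1} with hK
  have hKclosed : IsClosed K := by
    have h1 : IsClosed {v : ι → ℝ | ∀ i, 0 ≤ v i} := by
      have : {v : ι → ℝ | ∀ i, 0 ≤ v i} = ⋂ i, {v | 0 ≤ v i} := by
        ext v; simp [Set.mem_iInter]
      rw [this]
      exact isClosed_iInter fun i => isClosed_le continuous_const (continuous_apply i)
    have h2 : IsClosed {v : ι → ℝ | ∑ i, v i = 1} :=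
      isClosed_eq (continuous_finset_sum _ fun i _ => continuous_apply i) continuous_const
    exact h1.inter h2
  have hKbdd : Bornology.IsBounded K := by
    refine (Metric.isBounded_closedBall (x := (0 : ι → ℝ)) (r := 1)).subset ?_
    intro v hv
    rw [Metric.mem_closedBall, dist_zero_right, pi_norm_le_iff_of_nonneg zero_le_one]
    intro i
    rw [Real.norm_eq_abs, abs_of_nonneg (hv.1 i), ← hv.2]
    exact Finset.single_le_sum (f := fun j => v j) (fun j _ => hv.1 j) (Finset.mem_univ i)
  have hKcomp : IsCompact K := Metric.isCompact_of_isClosed_isBounded hKclosed hKbdd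
  have hmem : ∀ k, u k ∈ K := fun k => ⟨hu_nonneg k, hu_sum k⟩
  obtain ⟨w, hwK, φ, hφ, hconv⟩ := hKcomp.tendsto_subseq hmem
  refine ⟨w, hwK.1, hwK.2, ?_⟩
  funext i
  have hcont : Continuous fun v : ι → ℝ => M.mulVec v i - ρ * v i := by
    have he : (fun v : ι → ℝ => M.mulVec v i) = fun v : ι → ℝ => ∑ j, M i j * v j := by
      funext v; rw [Matrix.mulVec, dotProduct]
    have hsum : Continuous fun v : ι → ℝ => ∑ j, M i j * v j :=
      continuous_finset_sum _ fun j _ => continuous_const.mul (continuous_apply j)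
    exact (he ▸ hsum).sub (continuous_const.mul (continuous_apply i))
  have h1 : Tendsto (fun k => M.mulVec (u (φ k)) i - ρ * u (φ k) i) atTop
      (𝓝 (M.mulVec w i - ρ * w i)) := (hcont.tendsto w).comp hconv
  have h2 : Tendsto (fun k => M.mulVec (u (φ k)) i - ρ * u (φ k) i) atTop (𝓝 0) :=
    (hres i).comp hφ.tendsto_atTop
  have h3 := tendsto_nhds_unique h1 h2
  have h4 : M.mulVec w i = ρ * w i := by
    have := sub_eq_zero.mp h3
    linarith [this]
  rw [h4]
  simp [Pi.smul_apply, smul_eq_mul]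


end PFAux


/-- Perron–Frobenius for nonnegative tubal matrices: if `A` is nonnegative and
nonzero, then `ρ(A)` is a t-eigenvalue of `A`, with a nonnegative nonzero
t-eigenvector. -/

theorem pf_nonneg_tubal {n p : ℕ} (A : Fin n → Fin n → Fin p → ℝ)
    (hA : ∀ i j, TNonneg (A i j)) (hA0 : A ≠ 0) :
    ((tRho A : ℂ) ∈ tSpec A) ∧
      ∃ X : Fin n → Fin p → ℝ, (∀ i, TNonneg (X i)) ∧ X ≠ 0 ∧
        tMatVec A X = fun i => tRho A • X i := by
  have hn : n ≠ 0 := by rintro rfl; exact hA0 (funext fun i => i.elim0)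
  have hp : p ≠ 0 := by
    rintro rfl
    exact hA0 (funext fun i => funext fun j => funext fun k => k.elim0)
  haveI : NeZero n := ⟨hn⟩
  haveI : NeZero p := ⟨hp⟩
  set M : Matrix (Fin n × Fin p) (Fin n × Fin p) ℝ :=
    fun x y => A x.1 y.1 (x.2 - y.2) with hMdef
  have hM : ∀ x y, 0 ≤ M x y := fun x y => hA x.1 y.1 _
  set Mc : Matrix (Fin n × Fin p) (Fin n × Fin p) ℂ := M.map Complex.ofReal with hMc
  -- L1 real
  have L1 : ∀ (X : Fin n → Fin p → ℝ) (i : Fin n) (k : Fin p),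
      tMatVec A X i k = M.mulVec (fun y => X y.1 y.2) (i, k) := by
    intro X i k
    rw [Matrix.mulVec, dotProduct, Fintype.sum_prod_type]
    unfold tMatVec tConv
    rw [Finset.sum_apply]
    refine Finset.sum_congr rfl fun j _ => ?_
    exact Fintype.sum_equiv (Equiv.subLeft k)
      (fun l => A i j l * X j (k - l)) (fun l => A i j (k - l) * X j l)
      (fun l => by simp [Equiv.subLeft, sub_sub_cancel])
  have L1c : ∀ (X : Fin n → Fin p → ℂ) (i : Fin n) (k : Fin p),
      (∑ j : Fin n, tConvC (fun k' => (A i j k' : ℂ)) (X j)) k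
        = Mc.mulVec (fun y => X y.1 y.2) (i, k) := by
    intro X i k
    rw [Matrix.mulVec, dotProduct, Fintype.sum_prod_type]
    rw [Finset.sum_apply]
    refine Finset.sum_congr rfl fun j _ => ?_
    unfold tConvC
    exact Fintype.sum_equiv (Equiv.subLeft k)
      (fun l => (A i j l : ℂ) * X j (k - l)) (fun l => (A i j (k - l) : ℂ) * X j l)
      (fun l => by simp [Equiv.subLeft, sub_sub_cancel, Matrix.map_apply])
  -- spectrum identification
  have hspec : tSpec A = {z : ℂ | (z • (1 : Matrix (Fin n × Fin p) (Fin n × Fin p) ℂ) - Mc).det = 0} := by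
    ext z
    simp only [tSpec, Set.mem_setOf_eq, PFAux.mem_E_iff Mc z]
    constructor
    · rintro ⟨X, hX0, hXeq⟩
      refine ⟨fun y => X y.1 y.2, ?_, ?_⟩
      · intro h
        apply hX0
        funext j l
        exact congrFun h (j, l)
      · funext y
        have := congrFun (congrFun hXeq y.1) y.2
        rw [L1c X y.1 y.2] at this
        simpa using this
    · rintro ⟨v, hv0, hv⟩
      refine ⟨fun j l => v (j, l), ?_, ?_⟩
      · intro h
        apply hv0
        funext y
        have := congrFun (congrFun h y.1) y.2
        simpa using this
      · funext i k
        have h2 : (fun y : Fin n × Fin p => v (y.1, y.2)) = v := by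
          funext y; rfl
        rw [Pi.smul_apply, Pi.smul_apply, smul_eq_mul]
        have := L1c (fun j l => v (j, l)) i k
        rw [this, h2, hv]
        simp
  set E : Set ℂ := {z : ℂ | (z • (1 : Matrix (Fin n × Fin p) (Fin n × Fin p) ℂ) - Mc).det = 0}
    with hE
  have hfin : E.Finite := PFAux.E_finite Mc
  have hne : E.Nonempty := PFAux.E_nonempty Mc
  obtain ⟨l0, hl0E, hl0max⟩ := hfin.exists_maximalFor (fun z : ℂ => ‖z‖) E hne
  have hmax : ∀ z ∈ E, ‖z‖ ≤ ‖l0‖ := by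
    intro z hz
    by_contra hlt
    push_neg at hlt
    exact absurd (hl0max hz hlt.le) (not_le.mpr hlt)
  set ρ : ℝ := ‖l0‖ with hρdef
  have htρ : tRho A = ρ := by
    rw [tRho, hspec]
    exact IsGreatest.csSup_eq ⟨⟨l0, hl0E, rfl⟩, by rintro r ⟨b, hb, rfl⟩; exact hmax b hb⟩
  have hub : ∀ z : ℂ,
      (z • (1 : Matrix (Fin n × Fin p) (Fin n × Fin p) ℂ) - M.map Complex.ofReal).det = 0 →
        ‖z‖ ≤ ρ := by
    intro z hz
    exact hmax z hz
  obtain ⟨u, hu_nonneg, hu_sum, hu_eig⟩ := PFAux.pf_matrix M hM (ρ := ρ) (l0 := l0) hl0E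
    (by rfl) hub
  have hu0 : u ≠ 0 := by
    intro h
    rw [h] at hu_sum
    simpa using hu_sum
  constructor
  · -- (tRho A : ℂ) ∈ tSpec A
    rw [htρ, hspec]
    refine (PFAux.mem_E_iff Mc (ρ : ℂ)).mpr ⟨fun y => (u y : ℂ), ?_, ?_⟩
    · intro h
      apply hu0
      funext y
      have := congrFun h y
      simpa using this
    · funext y
      have h1 : Mc.mulVec (fun y => (u y : ℂ)) y = ((M.mulVec u y : ℝ) : ℂ) := by
        rw [Matrix.mulVec, Matrix.mulVec, dotProduct, dotProduct]
        push_cast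
        rfl
      rw [h1, hu_eig]
      simp
  · refine ⟨fun j l => u (j, l), fun i k => hu_nonneg (i, k), ?_, ?_⟩
    · intro h
      apply hu0
      funext y
      have := congrFun (congrFun h y.1) y.2
      simpa using this
    · funext i k
      rw [L1 (fun j l => u (j, l)) i k]
      have h2 : (fun y : Fin n × Fin p => u (y.1, y.2)) = u := by funext y; rfl
      rw [h2, hu_eig, htρ]
      simp
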